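/- If A : ℝ → Matrix (Fin n) (Fin n) ℝ is continuous and for each s the matrix -A(s) is an M-matrix (so that exp(∫ₛᵗ A(ξ)dξ) is entrywise nonnegative for all s ≤ t), and B : ℝ → (Fin n → ℝ) is continuous with nonnegative entries, then any solution X of X'(t) = A(t)·X(t) + B(t) with X(0) entrywise nonnegative remains entrywise nonnegative for all t ≥ 0. -/

import Mathlib

open Matrix intervalIntegral NormedSpace

attribute [local instance] Matrix.linftyOpNormedAddCommGroup
  Matrix.linftyOpNormedRing Matrix.linftyOpNormedAlgebra

noncomputable def mulVecCLM (n : ℕ) :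
    Matrix (Fin n) (Fin n) ℝ →L[ℝ] (Fin n → ℝ) →L[ℝ] (Fin n → ℝ) :=
  LinearMap.toContinuousLinearMap
    { toFun := fun M => LinearMap.toContinuousLinearMap (Matrix.mulVecLin M)
      map_add' := fun M N => by ext v; simp [Matrix.mulVecLin_add]
      map_smul' := fun c M => by ext v; simp [Matrix.smul_mulVec] }

@[simp] theorem mulVecCLM_apply (n : ℕ) (M : Matrix (Fin n) (Fin n) ℝ) (v : Fin n → ℝ) :
    mulVecCLM n M v = M.mulVec v := rfl

set_option maxHeartbeats 1000000 in
theorem stmt_1 (n : ℕ) (A : ℝ → Matrix (Fin n) (Fin n) ℝ)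
    (B : ℝ → Fin n → ℝ) (X : ℝ → Fin n → ℝ)
    (hA : Continuous A)
    (hAcomm : ∀ s t, Commute (A s) (A t))
    (hMmat : ∀ s t, s ≤ t → ∀ i j, 0 ≤ NormedSpace.exp (∫ ξ in s..t, A ξ) i j)
    (hB : Continuous B) (hBpos : ∀ t i, 0 ≤ B t i)
    (hX : ∀ t, HasDerivAt X ((A t).mulVec (X t) + B t) t)
    (hX0 : ∀ i, 0 ≤ X 0 i) :
    ∀ t ≥ (0 : ℝ), ∀ i, 0 ≤ X t i := by
  letI : TopologicalSpace (Matrix (Fin n) (Fin n) ℝ) :=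
    (inferInstance : NormedAddCommGroup (Matrix (Fin n) (Fin n) ℝ)).toPseudoMetricSpace.toUniformSpace.toTopologicalSpace
  replace hA : Continuous A := hA
  set G : ℝ → Matrix (Fin n) (Fin n) ℝ := fun t => ∫ ξ in (0:ℝ)..t, A ξ with hGdef
  have hAint : ∀ a b : ℝ, IntervalIntegrable A MeasureTheory.volume a b :=
    fun a b => hA.intervalIntegrable a b
  have hG : ∀ t, HasDerivAt G (A t) t := fun t =>
    intervalIntegral.integral_hasDerivAt_right (hAint 0 t)
      hA.aestronglyMeasurable.stronglyMeasurableAtFilter hA.continuousAt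
  -- commuting with integrals
  have hCommInt : ∀ (C : Matrix (Fin n) (Fin n) ℝ), (∀ ξ, Commute C (A ξ)) →
      ∀ a b : ℝ, Commute C (∫ ξ in a..b, A ξ) := by
    intro C hC a b
    unfold Commute SemiconjBy
    have h1 := ContinuousLinearMap.intervalIntegral_comp_comm
      (ContinuousLinearMap.mul ℝ (Matrix (Fin n) (Fin n) ℝ) C) (hAint a b)
    have h2 := ContinuousLinearMap.intervalIntegral_comp_comm
      ((ContinuousLinearMap.mul ℝ (Matrix (Fin n) (Fin n) ℝ)).flip C) (hAint a b)
    simp only [ContinuousLinearMap.mul_apply', ContinuousLinearMap.flip_apply] at h1 h2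
    rw [← h1, ← h2]
    exact intervalIntegral.integral_congr fun ξ _ => (hC ξ)
  have hCommGG : ∀ a b c d : ℝ, Commute (∫ ξ in a..b, A ξ) (∫ ξ in c..d, A ξ) := by
    intro a b c d
    exact (hCommInt _ (fun ξ => ((hCommInt (A ξ) (fun η => hAcomm ξ η) a b).symm)) c d)
  -- derivative of E := exp (-G t)
  set E : ℝ → Matrix (Fin n) (Fin n) ℝ := fun t => exp (-G t) with hEdef
  have hE : ∀ t, HasDerivAt E (E t * (-A t)) t := by
    intro t
    have hcomm : ∀ u, Commute (-G t) (G t - G u) := fun u =>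
      (((hCommGG 0 t 0 t).sub_right (hCommGG 0 t 0 u))).neg_left
    have key : E = fun u => E t * exp (G t - G u) := by
      funext u
      rw [hEdef]
      show exp (-G u) = exp (-G t) * exp (G t - G u)
      rw [← exp_add_of_commute (hcomm u)]
      congr 1
      abel
    rw [key]
    have hg : HasDerivAt (fun u => G t - G u) (-(A t)) t := (hG t).const_sub (G t)
    have hg0 : (fun u => G t - G u) t = 0 := by simp
    have hexp : HasDerivAt (fun u => exp (G t - G u)) (-(A t)) t := by
      have h0 : HasFDerivAt (exp)
          (1 : Matrix (Fin n) (Fin n) ℝ →L[ℝ] Matrix (Fin n) (Fin n) ℝ)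
          ((fun u => G t - G u) t) := by
        simpa using (hasFDerivAt_exp_zero (𝕂 := ℝ) (𝔸 := Matrix (Fin n) (Fin n) ℝ))
      have h1 := h0.comp_hasDerivAt t hg
      simp only [ContinuousLinearMap.one_apply] at h1
      exact h1
    simpa using hexp.const_mul (E t)
  have hEcont : Continuous E := continuous_iff_continuousAt.mpr fun u => (hE u).continuousAt
  set Y : ℝ → Fin n → ℝ := fun t => (E t).mulVec (X t) with hYdef
  have hY : ∀ t, HasDerivAt Y ((E t).mulVec (B t)) t := by
    intro t
    have hc : HasDerivAt (fun u => mulVecCLM n (E u)) (mulVecCLM n (E t * (-A t))) t :=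
      (mulVecCLM n).hasFDerivAt.comp_hasDerivAt t (hE t)
    have h2 := hc.clm_apply (hX t)
    have : HasDerivAt Y
        ((E t * -A t) *ᵥ X t + E t *ᵥ ((A t) *ᵥ X t + B t)) t := h2
    convert this using 1
    rw [Matrix.mulVec_add, Matrix.mul_neg, Matrix.neg_mulVec, ← Matrix.mulVec_mulVec]
    abel
  set f : ℝ → Fin n → ℝ := fun s => (E s).mulVec (B s) with hfdef
  have hfcont : Continuous f := Continuous.clm_apply ((mulVecCLM n).continuous.comp hEcont) hB
  have hfint : ∀ a b : ℝ, IntervalIntegrable f MeasureTheory.volume a b :=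
    fun a b => hfcont.intervalIntegrable a b
  have hFTC : ∀ t : ℝ, ∫ s in (0:ℝ)..t, f s = Y t - Y 0 := fun t =>
    intervalIntegral.integral_eq_sub_of_hasDerivAt (fun u _ => hY u) (hfint 0 t)
  intro t ht i
  have hinv : exp (G t) * E t = 1 := by
    show exp (G t) * exp (-G t) = 1
    rw [← exp_add_of_commute (Commute.neg_right (Commute.refl (G t)))]
    simp
  have hY0 : Y 0 = X 0 := by
    show (exp (-G 0)) *ᵥ X 0 = X 0
    have : G 0 = 0 := intervalIntegral.integral_same
    rw [this]
    simp [Matrix.one_mulVec]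
  have hXt : X t = (exp (G t)) *ᵥ (X 0) + (exp (G t)) *ᵥ (∫ s in (0:ℝ)..t, f s) := by
    rw [hFTC t, hY0, ← Matrix.mulVec_add]
    have : X 0 + (Y t - X 0) = Y t := by abel
    rw [this]
    show X t = exp (G t) *ᵥ (exp (-G t) *ᵥ X t)
    rw [Matrix.mulVec_mulVec, hinv, Matrix.one_mulVec]
  have hterm1 : 0 ≤ ((exp (G t)) *ᵥ (X 0)) i := by
    simp only [Matrix.mulVec, dotProduct]
    apply Finset.sum_nonneg
    intro j _
    exact mul_nonneg (hMmat 0 t ht i j) (hX0 j)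
  have hGts : ∀ s : ℝ, exp (G t) * exp (-G s) = exp (∫ ξ in s..t, A ξ) := by
    intro s
    rw [← exp_add_of_commute ((hCommGG 0 t 0 s).neg_right)]
    congr 1
    rw [← intervalIntegral.integral_interval_sub_left (hAint 0 t) (hAint 0 s)]
    abel
  have hgeq : ∀ s : ℝ, (exp (∫ ξ in s..t, A ξ)) *ᵥ (B s) = (exp (G t)) *ᵥ f s := by
    intro s
    show _ = exp (G t) *ᵥ (exp (-G s) *ᵥ B s)
    rw [Matrix.mulVec_mulVec, hGts s]
  have hmove : (exp (G t)) *ᵥ (∫ s in (0:ℝ)..t, f s)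
      = ∫ s in (0:ℝ)..t, (exp (∫ ξ in s..t, A ξ)) *ᵥ (B s) := by
    have h1 := ContinuousLinearMap.intervalIntegral_comp_comm
      (mulVecCLM n (exp (G t))) (hfint 0 t)
    show (mulVecCLM n (exp (G t))) (∫ s in (0:ℝ)..t, f s) = _
    rw [← h1]
    exact intervalIntegral.integral_congr fun s _ => (hgeq s).symm
  set g : ℝ → Fin n → ℝ := fun s => (exp (∫ ξ in s..t, A ξ)) *ᵥ (B s) with hgdef
  have hgint : IntervalIntegrable g MeasureTheory.volume 0 t := by
    have hg2 : g = fun s => (exp (G t)) *ᵥ f s := funext fun s => hgeq s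
    rw [hg2]
    exact (((mulVecCLM n (exp (G t))).continuous.comp hfcont).intervalIntegrable 0 t)
  have hterm2 : 0 ≤ ((exp (G t)) *ᵥ (∫ s in (0:ℝ)..t, f s)) i := by
    rw [hmove]
    have hproj := ContinuousLinearMap.intervalIntegral_comp_comm
      (ContinuousLinearMap.proj (R := ℝ) (φ := fun _ : Fin n => ℝ) i) hgint
    have heq : (∫ s in (0:ℝ)..t, g s) i = ∫ s in (0:ℝ)..t, g s i := by
      show (ContinuousLinearMap.proj (R := ℝ) (φ := fun _ : Fin n => ℝ) i)
        (∫ s in (0:ℝ)..t, g s) = _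
      rw [← hproj]
      rfl
    rw [heq]
    apply intervalIntegral.integral_nonneg ht
    intro s hs
    show 0 ≤ ((exp (∫ ξ in s..t, A ξ)) *ᵥ (B s)) i
    simp only [Matrix.mulVec, dotProduct]
    apply Finset.sum_nonneg
    intro j _
    exact mul_nonneg (hMmat s t hs.2 i j) (hBpos s j)
  rw [hXt]
  exact add_nonneg hterm1 hterm2
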